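/- Let ρ and σ be positive semidefinite complex matrices of the same finite size and let U be a unitary matrix with UσU† = σ. Setting ω = ½(ρ + UρU†), one has D(ρ‖σ) = D(ω‖σ) + ½·D(ρ‖ω) + ½·D(UρU†‖ω), with equality in [0,+∞]. -/

import Mathlib

open scoped ENNReal ComplexOrder Matrix

/-- `Log X`: functional calculus of the real logarithm (with `log 0 = 0`)
applied to a Hermitian (in particular, positive semidefinite) matrix `X`;
defined as `0` on non-Hermitian matrices. -/
noncomputable def matLog {n : Type*} [Fintype n] [DecidableEq n]
    (X : Matrix n n ℂ) : Matrix n n ℂ :=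
  if hX : X.IsHermitian then hX.cfc Real.log else 0

/-- Lindblad's extended quantum relative entropy `D(ρ‖σ)`, with values in `[0,+∞]`:
`D(ρ‖σ) = Tr(ρ·Log ρ) − Tr(ρ·Log σ) + Tr σ − Tr ρ` if `ran ρ ⊆ ran σ`, and `+∞` otherwise. -/
noncomputable def relEnt {n : Type*} [Fintype n] [DecidableEq n]
    (ρ σ : Matrix n n ℂ) : ℝ≥0∞ :=
  open Classical in
  if LinearMap.range ρ.mulVecLin ≤ LinearMap.range σ.mulVecLin then
    ENNReal.ofReal ((ρ * matLog ρ).trace.re - (ρ * matLog σ).trace.re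
      + σ.trace.re - ρ.trace.re)
  else ∞

set_option linter.unusedSectionVars false

namespace RelEntAux

variable {n : Type*} [Fintype n] [DecidableEq n]

open Matrix Polynomial




lemma umul (U : Matrix n n ℂ) (hU : U ∈ Matrix.unitaryGroup n ℂ) : U * Uᴴ = 1 := by
  rw [← Matrix.star_eq_conjTranspose]; exact Matrix.mem_unitaryGroup_iff.mp hU

lemma umul' (U : Matrix n n ℂ) (hU : U ∈ Matrix.unitaryGroup n ℂ) : Uᴴ * U = 1 := by
  rw [← Matrix.star_eq_conjTranspose]; exact Matrix.mem_unitaryGroup_iff'.mp hU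

/-- Conjugation by a unitary as an `ℝ`-algebra homomorphism. -/
noncomputable def conjAH (U : Matrix n n ℂ) (hU : U ∈ Matrix.unitaryGroup n ℂ) :
    Matrix n n ℂ →ₐ[ℝ] Matrix n n ℂ where
  toFun X := U * X * Uᴴ
  map_one' := by simp only [mul_one, umul U hU]
  map_mul' X Y := by
    calc U * (X * Y) * Uᴴ = U * X * (Uᴴ * U) * Y * Uᴴ := by
          rw [umul' U hU, mul_one, mul_assoc U X Y, mul_assoc]
    _ = U * X * Uᴴ * (U * Y * Uᴴ) := by
          simp only [mul_assoc]
  map_zero' := by simp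
  map_add' X Y := by simp only [Matrix.mul_add, Matrix.add_mul]
  commutes' r := by
    rw [mul_assoc, Algebra.commutes, ← mul_assoc, umul U hU, one_mul]

lemma conjAH_apply (U : Matrix n n ℂ) (hU : U ∈ Matrix.unitaryGroup n ℂ) (X : Matrix n n ℂ) :
    conjAH U hU X = U * X * Uᴴ := rfl

lemma aeval_conj (U : Matrix n n ℂ) (hU : U ∈ Matrix.unitaryGroup n ℂ)
    (A : Matrix n n ℂ) (P : ℝ[X]) :
    aeval (U * A * Uᴴ) P = U * aeval A P * Uᴴ := by
  exact Polynomial.aeval_algHom_apply (conjAH U hU) A P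

lemma aeval_diagonal (d : n → ℂ) (P : ℝ[X]) :
    aeval (Matrix.diagonal d) P = Matrix.diagonal (fun i => aeval (d i) P) := by
  have h := Polynomial.aeval_algHom_apply (Matrix.diagonalAlgHom (n := n) (α := ℂ) ℝ) d P
  simp only [Matrix.diagonalAlgHom_apply] at h
  rw [h]
  have h2 : (aeval d) P = fun i => aeval (d i) P :=
    funext fun i => (Polynomial.aeval_algHom_apply (Pi.evalAlgHom ℝ (fun _ : n => ℂ) i) d P).symm
  rw [h2]

lemma aeval_ofReal (x : ℝ) (P : ℝ[X]) :
    aeval ((x : ℂ)) P = ((P.eval x : ℝ) : ℂ) := by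
  have h := Polynomial.aeval_algHom_apply (Complex.ofRealAm) x P
  simp only [Complex.ofRealAm_coe] at h
  rw [h]
  norm_cast




lemma spectral {A : Matrix n n ℂ} (hA : A.IsHermitian) :
    A = (hA.eigenvectorUnitary : Matrix n n ℂ) *
        Matrix.diagonal (fun i => (hA.eigenvalues i : ℂ)) *
        (hA.eigenvectorUnitary : Matrix n n ℂ)ᴴ := by
  have := hA.spectral_theorem
  simpa [Function.comp_def, Matrix.star_eq_conjTranspose] using this

lemma cfc_val {A : Matrix n n ℂ} (hA : A.IsHermitian) (f : ℝ → ℝ) :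
    hA.cfc f = (hA.eigenvectorUnitary : Matrix n n ℂ) *
        Matrix.diagonal (fun i => (f (hA.eigenvalues i) : ℂ)) *
        (hA.eigenvectorUnitary : Matrix n n ℂ)ᴴ := by
  rw [Matrix.IsHermitian.cfc]
  simp [Function.comp_def, Matrix.star_eq_conjTranspose]

lemma cfc_decomp {A : Matrix n n ℂ} (hA : A.IsHermitian) (f : ℝ → ℝ)
    {W : Matrix n n ℂ} (hW : W ∈ Matrix.unitaryGroup n ℂ) {d : n → ℝ}
    (hdec : A = W * Matrix.diagonal (fun i => (d i : ℂ)) * Wᴴ) :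
    hA.cfc f = W * Matrix.diagonal (fun i => (f (d i) : ℂ)) * Wᴴ := by
  classical
  set p := hA.eigenvalues with hp
  set V : Matrix n n ℂ := (hA.eigenvectorUnitary : Matrix n n ℂ) with hV
  have hVmem : V ∈ Matrix.unitaryGroup n ℂ := hA.eigenvectorUnitary.2
  have hspec : A = V * Matrix.diagonal (fun i => (p i : ℂ)) * Vᴴ := spectral hA
  set s : Finset ℝ := Finset.image p Finset.univ ∪ Finset.image d Finset.univ with hs
  set P := Lagrange.interpolate s id f with hPdef
  have hP : ∀ x ∈ s, P.eval x = f x := fun x hx => by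
    exact Lagrange.eval_interpolate_at_node (v := id) (r := f)
      Function.injective_id.injOn hx
  have key : ∀ (W' : Matrix n n ℂ), W' ∈ Matrix.unitaryGroup n ℂ → ∀ (e : n → ℝ),
      (∀ i, e i ∈ s) → A = W' * Matrix.diagonal (fun i => (e i : ℂ)) * W'ᴴ →
      Polynomial.aeval A P = W' * Matrix.diagonal (fun i => (f (e i) : ℂ)) * W'ᴴ := by
    intro W' hW' e he hdec'
    rw [hdec', aeval_conj W' hW', aeval_diagonal]
    have hfun : (fun i => aeval ((e i : ℂ)) P) = fun i => ((f (e i) : ℝ) : ℂ) :=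
      funext fun i => by rw [aeval_ofReal, hP _ (he i)]
    rw [hfun]
  have h1 := key V hVmem p (fun i => by simp [hs]) hspec
  have h2 := key W hW d (fun i => by simp [hs]) hdec
  rw [cfc_val hA f, ← h1, h2]

lemma conj_isHermitian {A : Matrix n n ℂ} (hA : A.IsHermitian) (U : Matrix n n ℂ) :
    (U * A * Uᴴ).IsHermitian := by
  simp [Matrix.IsHermitian, Matrix.conjTranspose_mul, hA.eq, Matrix.mul_assoc]

lemma matLog_conj (U : Matrix n n ℂ) (hU : U ∈ Matrix.unitaryGroup n ℂ)
    {A : Matrix n n ℂ} (hA : A.IsHermitian) :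
    matLog (U * A * Uᴴ) = U * matLog A * Uᴴ := by
  have hA2 : (U * A * Uᴴ).IsHermitian := conj_isHermitian hA U
  rw [matLog, matLog, dif_pos hA, dif_pos hA2]
  set V : Matrix n n ℂ := (hA.eigenvectorUnitary : Matrix n n ℂ) with hV
  have hVmem : V ∈ Matrix.unitaryGroup n ℂ := hA.eigenvectorUnitary.2
  have hdec2 : U * A * Uᴴ = (U * V) * Matrix.diagonal (fun i => (hA.eigenvalues i : ℂ)) *
      (U * V)ᴴ := by
    conv_lhs => rw [spectral hA]
    simp [hV, Matrix.conjTranspose_mul, Matrix.mul_assoc]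
  rw [cfc_decomp hA2 Real.log (mul_mem hU hVmem) hdec2, cfc_decomp hA Real.log hVmem (spectral hA)]
  simp [Matrix.conjTranspose_mul, Matrix.mul_assoc]



lemma matLog_psd {A : Matrix n n ℂ} (hA : A.PosSemidef) :
    matLog A = hA.1.cfc Real.log := dif_pos hA.1

lemma klein_scalar {r q : ℝ} (hr : 0 ≤ r) (hq : 0 < q) :
    0 ≤ r * Real.log r - r * Real.log q + q - r := by
  rcases eq_or_lt_of_le hr with h | h
  · simp only [← h, zero_mul, sub_zero, add_zero, sub_zero, zero_sub, neg_zero]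
    linarith
  · have hlog := Real.log_le_sub_one_of_pos (show (0:ℝ) < q / r from div_pos hq h)
    rw [Real.log_div (ne_of_gt hq) (ne_of_gt h)] at hlog
    have h2 := mul_le_mul_of_nonneg_left hlog (le_of_lt h)
    rw [mul_sub, mul_sub, mul_div_cancel₀ _ (ne_of_gt h), mul_one] at h2
    linarith

lemma trace_form (ρ : Matrix n n ℂ) (W : Matrix n n ℂ) (l : n → ℂ) :
    (ρ * (W * Matrix.diagonal l * Wᴴ)).trace = ∑ j, (Wᴴ * ρ * W) j j * l j := by
  have h1 : ρ * (W * Matrix.diagonal l * Wᴴ) = (ρ * W * Matrix.diagonal l) * Wᴴ := by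
    simp [Matrix.mul_assoc]
  rw [h1, Matrix.trace_mul_comm, ← Matrix.mul_assoc, ← Matrix.mul_assoc]
  simp [Matrix.trace, Matrix.diag, Matrix.mul_diagonal]

lemma psd_diag_real {M : Matrix n n ℂ} (hM : M.PosSemidef) (j : n) :
    M j j = ((M j j).re : ℂ) ∧ 0 ≤ (M j j).re := by
  have h := hM.dotProduct_mulVec_nonneg (Pi.single j 1)
  have he : star (Pi.single j 1 : n → ℂ) ⬝ᵥ M *ᵥ Pi.single j 1 = M j j := by
    simp [dotProduct, Matrix.mulVec, Pi.single_apply, apply_ite,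
      Finset.sum_ite_eq', Finset.mul_sum, mul_ite, ite_mul]
  rw [he] at h
  rw [Complex.le_def] at h
  simp only [Complex.zero_re, Complex.zero_im] at h
  refine ⟨Complex.ext ?_ ?_, h.1⟩
  · simp
  · simp [h.2.symm]

theorem klein {ρ σ : Matrix n n ℂ} (hρ : ρ.PosSemidef) (hσ : σ.PosSemidef)
    (hker : ∀ x, σ *ᵥ x = 0 → ρ *ᵥ x = 0) :
    0 ≤ (ρ * matLog ρ).trace.re - (ρ * matLog σ).trace.re + σ.trace.re - ρ.trace.re := by
  classical
  set W : Matrix n n ℂ := (hσ.1.eigenvectorUnitary : Matrix n n ℂ) with hW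
  have hWmem : W ∈ Matrix.unitaryGroup n ℂ := hσ.1.eigenvectorUnitary.2
  set V : Matrix n n ℂ := (hρ.1.eigenvectorUnitary : Matrix n n ℂ) with hV
  have hVmem : V ∈ Matrix.unitaryGroup n ℂ := hρ.1.eigenvectorUnitary.2
  set p := hρ.1.eigenvalues with hp
  set q := hσ.1.eigenvalues with hq
  have hp0 : ∀ i, 0 ≤ p i := fun i => hρ.eigenvalues_nonneg i
  have hq0 : ∀ j, 0 ≤ q j := fun j => hσ.eigenvalues_nonneg j
  set N : Matrix n n ℂ := Wᴴ * ρ * W with hN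
  have hNpsd : N.PosSemidef := hρ.conjTranspose_mul_mul_same W
  set r : n → ℝ := fun j => (N j j).re with hr
  have hNjj : ∀ j, N j j = ((r j : ℝ) : ℂ) := fun j => (psd_diag_real hNpsd j).1
  have hr0 : ∀ j, 0 ≤ r j := fun j => (psd_diag_real hNpsd j).2
  set C : Matrix n n ℂ := Vᴴ * W with hC
  set c : n → n → ℝ := fun i j => Complex.normSq (C i j) with hc
  have hc0 : ∀ i j, 0 ≤ c i j := fun i j => Complex.normSq_nonneg _
  -- trace identities
  have T1 : (ρ * matLog σ).trace.re = ∑ j, r j * Real.log (q j) := by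
    rw [matLog_psd hσ, cfc_val hσ.1 Real.log, trace_form, Complex.re_sum]
    refine Finset.sum_congr rfl fun j _ => ?_
    rw [← hN, hNjj j, ← Complex.ofReal_mul]
    exact Complex.ofReal_re _
  have T2 : (ρ * matLog ρ).trace.re = ∑ i, p i * Real.log (p i) := by
    rw [matLog_psd hρ, cfc_val hρ.1 Real.log, trace_form, Complex.re_sum]
    have hdiag : Vᴴ * ρ * V = Matrix.diagonal (fun i => (p i : ℂ)) := by
      have hs := spectral hρ.1
      rw [← hV, ← hp] at hs
      rw [hs]
      simp only [Matrix.mul_assoc]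
      rw [umul' V hVmem, Matrix.mul_one, ← Matrix.mul_assoc, umul' V hVmem, Matrix.one_mul]
    refine Finset.sum_congr rfl fun i _ => ?_
    rw [hdiag]
    simp [hp, Matrix.diagonal_apply_eq, ← Complex.ofReal_mul]
  have T3 : σ.trace.re = ∑ j, q j := by
    have hσdec := spectral hσ.1
    rw [← hW, ← hq] at hσdec
    conv_lhs => rw [hσdec]
    rw [Matrix.trace_mul_cycle, umul' W hWmem, Matrix.one_mul,
      Matrix.trace_diagonal, Complex.re_sum]
    simp
  have T5 : ρ.trace.re = ∑ j, r j := by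
    have : N.trace = ρ.trace := by
      rw [hN, Matrix.trace_mul_cycle, umul W hWmem, Matrix.one_mul]
    rw [← this, Matrix.trace, Complex.re_sum]
    rfl
  -- decomposition of r
  have F5 : ∀ j, r j = ∑ i, c i j * p i := by
    intro j
    have hNdec : N = Cᴴ * Matrix.diagonal (fun i => (p i : ℂ)) * C := by
      rw [hN, hC]
      conv_lhs => rw [spectral hρ.1, ← hV, ← hp]
      simp [Matrix.conjTranspose_mul, Matrix.mul_assoc]
    have hentry : N j j = ∑ i, (starRingEnd ℂ) (C i j) * ((p i : ℂ) * C i j) := by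
      rw [hNdec]
      simp only [Matrix.mul_apply, Matrix.conjTranspose_apply, Matrix.diagonal_apply,
        ite_mul, zero_mul, mul_ite, mul_zero, Finset.sum_ite_eq, Finset.sum_ite_eq',
        Finset.mem_univ, if_true]
      refine Finset.sum_congr rfl fun i _ => by simp only [Complex.star_def]; ring
    have : N j j = ((∑ i, c i j * p i : ℝ) : ℂ) := by
      rw [hentry]
      push_cast
      refine Finset.sum_congr rfl fun i _ => ?_
      have hz : (starRingEnd ℂ) (C i j) * C i j = ((Complex.normSq (C i j) : ℝ) : ℂ) := by
        rw [mul_comm, Complex.mul_conj]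
      calc (starRingEnd ℂ) (C i j) * ((p i : ℂ) * C i j)
          = ((starRingEnd ℂ) (C i j) * C i j) * (p i : ℂ) := by ring
        _ = ((Complex.normSq (C i j) : ℝ) : ℂ) * (p i : ℂ) := by rw [hz]
    rw [hr]
    simp [this]
  have F6 : ∀ j, ∑ i, c i j = 1 := by
    intro j
    have hCC : Cᴴ * C = 1 := by
      rw [hC, Matrix.conjTranspose_mul, Matrix.conjTranspose_conjTranspose,
        Matrix.mul_assoc, ← Matrix.mul_assoc V, umul V hVmem, Matrix.one_mul, umul' W hWmem]
    have := congrArg (fun M : Matrix n n ℂ => (M j j).re) hCC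
    simp only [Matrix.mul_apply, Matrix.conjTranspose_apply, Matrix.one_apply_eq,
      Complex.one_re] at this
    rw [← this, Complex.re_sum]
    refine Finset.sum_congr rfl fun i _ => ?_
    have hz : star (C i j) * C i j = ((Complex.normSq (C i j) : ℝ) : ℂ) := by
      rw [Complex.star_def, mul_comm, Complex.mul_conj]
    rw [hz, Complex.ofReal_re]
  have F7 : ∀ i, ∑ j, c i j = 1 := by
    intro i
    have hCC : C * Cᴴ = 1 := by
      rw [hC, Matrix.conjTranspose_mul, Matrix.conjTranspose_conjTranspose,
        Matrix.mul_assoc, ← Matrix.mul_assoc W, umul W hWmem, Matrix.one_mul, umul' V hVmem]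
    have := congrArg (fun M : Matrix n n ℂ => (M i i).re) hCC
    simp only [Matrix.mul_apply, Matrix.conjTranspose_apply, Matrix.one_apply_eq,
      Complex.one_re] at this
    rw [← this, Complex.re_sum]
    refine Finset.sum_congr rfl fun j _ => ?_
    have hz : C i j * star (C i j) = ((Complex.normSq (C i j) : ℝ) : ℂ) := by
      rw [Complex.star_def, Complex.mul_conj]
    rw [hz, Complex.ofReal_re]
  have F8 : ∀ j, q j = 0 → r j = 0 := by
    intro j hqj
    set v : n → ℂ := fun a => W a j with hv
    have hσv : σ *ᵥ v = 0 := by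
      have hσW : σ * W = W * Matrix.diagonal (fun i => (q i : ℂ)) := by
        conv_lhs => rw [spectral hσ.1, ← hW, ← hq]
        rw [Matrix.mul_assoc, Matrix.mul_assoc, umul' W hWmem, Matrix.mul_one]
      funext a
      have h2 : (σ * W) a j = (W * Matrix.diagonal (fun i => (q i : ℂ))) a j :=
        congrArg (fun M : Matrix n n ℂ => M a j) hσW
      rw [Matrix.mul_diagonal] at h2
      rw [hqj] at h2
      simp only [Complex.ofReal_zero, mul_zero] at h2
      have h3 : (σ *ᵥ v) a = (σ * W) a j := by
        simp [Matrix.mul_apply, Matrix.mulVec, dotProduct, hv]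
      show (σ *ᵥ v) a = 0
      rw [h3, h2]
    have hρv : ρ *ᵥ v = 0 := hker v hσv
    have : N j j = 0 := by
      rw [hN]
      have : (Wᴴ * ρ * W) j j = ∑ a, (starRingEnd ℂ) (W a j) * (ρ *ᵥ v) a := by
        simp only [Matrix.mul_apply, Matrix.conjTranspose_apply, Matrix.mulVec,
          dotProduct, hv, Finset.mul_sum, Finset.sum_mul]
        rw [Finset.sum_comm]
        refine Finset.sum_congr rfl fun a _ => Finset.sum_congr rfl fun b _ => by
          simp only [Complex.star_def]; ring
      rw [this, hρv]
      simp
    rw [hr]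
    simp [this]
  -- assemble
  rw [T1, T2, T3, T5]
  have hswap : ∑ i, p i * Real.log (p i) = ∑ j, ∑ i, c i j * (p i * Real.log (p i)) := by
    rw [Finset.sum_comm]
    refine Finset.sum_congr rfl fun i _ => ?_
    rw [← Finset.sum_mul, F7 i, one_mul]
  rw [hswap, ← Finset.sum_sub_distrib, ← Finset.sum_add_distrib, ← Finset.sum_sub_distrib]
  refine Finset.sum_nonneg fun j _ => ?_
  by_cases hqj : q j = 0
  · have hrj : r j = 0 := F8 j hqj
    have hterms : ∀ i, c i j * p i = 0 := by
      have hsum : ∑ i, c i j * p i = 0 := (F5 j).symm.trans hrj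
      intro i
      have := (Finset.sum_eq_zero_iff_of_nonneg
        (fun i _ => mul_nonneg (hc0 i j) (hp0 i))).mp hsum i (Finset.mem_univ i)
      exact this
    have hmain : ∑ i, c i j * (p i * Real.log (p i)) = 0 := by
      refine Finset.sum_eq_zero fun i _ => ?_
      rcases mul_eq_zero.mp (hterms i) with h | h
      · rw [h, zero_mul]
      · rw [h]; simp
    rw [hmain, hrj, hqj]
    simp
  · have hqj' : 0 < q j := lt_of_le_of_ne (hq0 j) (Ne.symm hqj)
    have hjen : r j * Real.log (r j) ≤ ∑ i, c i j * (p i * Real.log (p i)) := by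
      have := Real.convexOn_mul_log.map_sum_le (t := Finset.univ)
        (w := fun i => c i j) (p := p) (fun i _ => hc0 i j) (F6 j)
        (fun i _ => Set.mem_Ici.mpr (hp0 i))
      rw [F5 j]
      simpa [smul_eq_mul] using this
    have := klein_scalar (hr0 j) hqj'
    linarith


lemma symmetric_range_eq {E : Type*} [NormedAddCommGroup E] [InnerProductSpace ℂ E]
    [FiniteDimensional ℂ E] {T : E →ₗ[ℂ] E} (hT : T.IsSymmetric) :
    LinearMap.range T = (LinearMap.ker T)ᗮ := by
  have hle : LinearMap.range T ≤ (LinearMap.ker T)ᗮ := by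
    rintro _ ⟨x, rfl⟩
    rw [Submodule.mem_orthogonal]
    intro u hu
    rw [← hT u x, LinearMap.mem_ker.mp hu, inner_zero_left]
  refine Submodule.eq_of_le_of_finrank_le hle ?_
  have h1 := LinearMap.finrank_range_add_finrank_ker T
  have h2 := Submodule.finrank_add_finrank_orthogonal (LinearMap.ker T)
  omega

lemma range_le_of_ker_le {A B : Matrix n n ℂ} (hA : A.IsHermitian) (hB : B.IsHermitian)
    (h : ∀ x, B *ᵥ x = 0 → A *ᵥ x = 0) :
    LinearMap.range A.mulVecLin ≤ LinearMap.range B.mulVecLin := by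
  have hTA : (Matrix.toEuclideanLin A).IsSymmetric := Matrix.isHermitian_iff_isSymmetric.mp hA
  have hTB : (Matrix.toEuclideanLin B).IsSymmetric := Matrix.isHermitian_iff_isSymmetric.mp hB
  have hker : LinearMap.ker (Matrix.toEuclideanLin B) ≤ LinearMap.ker (Matrix.toEuclideanLin A)
      := by
    intro x hx
    rw [LinearMap.mem_ker] at hx ⊢
    have hx' : B *ᵥ (WithLp.equiv 2 (n → ℂ) x) = 0 := by
      have := congrArg (WithLp.equiv 2 (n → ℂ)) hx
      simpa [Matrix.toEuclideanLin_apply] using this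
    have h2 := h _ hx'
    apply (WithLp.equiv 2 (n → ℂ)).injective
    rw [Matrix.toEuclideanLin_apply]
    simpa using h2
  have hrange : LinearMap.range (Matrix.toEuclideanLin A)
      ≤ LinearMap.range (Matrix.toEuclideanLin B) := by
    rw [symmetric_range_eq hTA, symmetric_range_eq hTB]
    exact Submodule.orthogonal_le hker
  rintro _ ⟨x, rfl⟩
  have hmem : (WithLp.equiv 2 (n → ℂ)).symm (A *ᵥ x) ∈ LinearMap.range (Matrix.toEuclideanLin A)
      := ⟨(WithLp.equiv 2 (n → ℂ)).symm x, by rw [Matrix.toEuclideanLin_apply]; simp⟩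
  obtain ⟨y, hy⟩ := hrange hmem
  refine ⟨WithLp.equiv 2 (n → ℂ) y, ?_⟩
  have := congrArg (WithLp.equiv 2 (n → ℂ)) hy
  simpa [Matrix.toEuclideanLin_apply, Matrix.mulVecLin] using this

lemma range_le_iff {A B : Matrix n n ℂ} (hA : A.PosSemidef) (hB : B.PosSemidef) :
    LinearMap.range A.mulVecLin ≤ LinearMap.range B.mulVecLin ↔
      ∀ x, B *ᵥ x = 0 → A *ᵥ x = 0 := by
  constructor
  · intro hle x hx
    obtain ⟨y, hy⟩ := hle ⟨x, rfl⟩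
    have hdot : star x ⬝ᵥ A *ᵥ x = 0 := by
      have hAx : A.mulVecLin x = A *ᵥ x := rfl
      rw [← hAx, ← hy]
      have hBy : B.mulVecLin y = B *ᵥ y := rfl
      rw [hBy, Matrix.dotProduct_mulVec]
      have hvm : star x ᵥ* B = 0 := by
        have hst := congrArg star hx
        rw [Matrix.star_mulVec, (show Bᴴ = B from hB.1)] at hst
        simpa using hst
      rw [hvm]
      simp
    exact (hA.dotProduct_mulVec_zero_iff x).mp hdot
  · exact fun h => range_le_of_ker_le hA.1 hB.1 h

end RelEntAux

open RelEntAux in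
/-- If `U` is unitary and `UσU† = σ` then, with `ω = ½(ρ + UρU†)`,
`D(ρ‖σ) = D(ω‖σ) + ½·D(ρ‖ω) + ½·D(UρU†‖ω)` in `[0,+∞]`. -/
theorem relEnt_unitary_mixing {n : Type*} [Fintype n] [DecidableEq n]
    (ρ σ U : Matrix n n ℂ) (hρ : ρ.PosSemidef) (hσ : σ.PosSemidef)
    (hU : U ∈ Matrix.unitaryGroup n ℂ) (hUσ : U * σ * Uᴴ = σ) :
    relEnt ρ σ
      = relEnt ((2⁻¹ : ℂ) • (ρ + U * ρ * Uᴴ)) σ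
        + 2⁻¹ * relEnt ρ ((2⁻¹ : ℂ) • (ρ + U * ρ * Uᴴ))
        + 2⁻¹ * relEnt (U * ρ * Uᴴ) ((2⁻¹ : ℂ) • (ρ + U * ρ * Uᴴ)) := by
  classical
  set ρ' : Matrix n n ℂ := U * ρ * Uᴴ with hρ'def
  set ω : Matrix n n ℂ := (2⁻¹ : ℂ) • (ρ + ρ') with hωdef
  have hρ' : ρ'.PosSemidef := hρ.mul_mul_conjTranspose_same U
  have hhalf : (0:ℂ) ≤ 2⁻¹ := by rw [Complex.le_def]; norm_num
  have hω : ω.PosSemidef := by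
    refine Matrix.PosSemidef.of_dotProduct_mulVec_nonneg ?_ ?_
    · have hsum : (ρ + ρ').IsHermitian := hρ.1.add hρ'.1
      show ωᴴ = ω
      rw [hωdef, Matrix.conjTranspose_smul, hsum.eq]
      congr 1
      simp [starRingEnd_apply]
    · intro x
      have hexp : star x ⬝ᵥ ω *ᵥ x
          = (2⁻¹:ℂ) * (star x ⬝ᵥ ρ *ᵥ x + star x ⬝ᵥ ρ' *ᵥ x) := by
        rw [hωdef, Matrix.smul_mulVec, Matrix.add_mulVec]
        simp [dotProduct_add, smul_eq_mul, mul_add]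
      rw [hexp]
      exact mul_nonneg hhalf (add_nonneg (hρ.dotProduct_mulVec_nonneg x) (hρ'.dotProduct_mulVec_nonneg x))
  -- kernel inclusions into ω
  have hkerωρ : ∀ x, ω *ᵥ x = 0 → ρ *ᵥ x = 0 ∧ ρ' *ᵥ x = 0 := by
    intro x hx
    have h0 : star x ⬝ᵥ ω *ᵥ x = 0 := by rw [hx]; simp
    have hexp : star x ⬝ᵥ ω *ᵥ x
        = (2⁻¹:ℂ) * (star x ⬝ᵥ ρ *ᵥ x + star x ⬝ᵥ ρ' *ᵥ x) := by
      rw [hωdef, Matrix.smul_mulVec, Matrix.add_mulVec]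
      simp [dotProduct_add, smul_eq_mul, mul_add]
    have hab : (star x ⬝ᵥ ρ *ᵥ x) + (star x ⬝ᵥ ρ' *ᵥ x) = 0 := by
      have h := hexp.symm.trans h0
      linear_combination 2 * h
    have ha := hρ.dotProduct_mulVec_nonneg x
    have hb := hρ'.dotProduct_mulVec_nonneg x
    have ha0 : star x ⬝ᵥ ρ *ᵥ x = 0 :=
      le_antisymm (by rw [← hab]; exact le_add_of_nonneg_right hb) ha
    have hb0 : star x ⬝ᵥ ρ' *ᵥ x = 0 :=
      le_antisymm (by rw [← hab]; exact le_add_of_nonneg_left ha) hb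
    exact ⟨(hρ.dotProduct_mulVec_zero_iff x).mp ha0,
      (hρ'.dotProduct_mulVec_zero_iff x).mp hb0⟩
  have hσU' : σ * Uᴴ = Uᴴ * σ := by
    have h := congrArg (fun M => Uᴴ * M) hUσ
    simp only [← Matrix.mul_assoc, umul' U hU, Matrix.one_mul] at h
    exact h
  have hkerσω : (∀ x, σ *ᵥ x = 0 → ρ *ᵥ x = 0) → ∀ x, σ *ᵥ x = 0 → ω *ᵥ x = 0 := by
    intro h1 x hx
    have hx2 : σ *ᵥ (Uᴴ *ᵥ x) = 0 := by
      rw [Matrix.mulVec_mulVec, hσU', ← Matrix.mulVec_mulVec, hx, Matrix.mulVec_zero]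
    have hρ2 := h1 _ hx2
    have hρ'x : ρ' *ᵥ x = 0 := by
      rw [hρ'def, ← Matrix.mulVec_mulVec, ← Matrix.mulVec_mulVec, hρ2, Matrix.mulVec_zero]
    have hρx := h1 x hx
    rw [hωdef, Matrix.smul_mulVec, Matrix.add_mulVec, hρx, hρ'x]
    simp
  -- conjugation-invariance facts
  have hLσ : U * matLog σ * Uᴴ = matLog σ := by
    have h := matLog_conj U hU hσ.1
    rw [hUσ] at h
    exact h.symm
  have hLρ' : matLog ρ' = U * matLog ρ * Uᴴ := matLog_conj U hU hρ.1
  have trace_conj : ∀ X : Matrix n n ℂ, (U * X * Uᴴ).trace = X.trace := by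
    intro X
    rw [Matrix.trace_mul_cycle, umul' U hU, Matrix.one_mul]
  have tρ' : ρ'.trace = ρ.trace := trace_conj ρ
  have tLρ' : (ρ' * matLog ρ').trace = (ρ * matLog ρ).trace := by
    have hmm : ρ' * matLog ρ' = U * (ρ * matLog ρ) * Uᴴ := by
      rw [hLρ', hρ'def]
      exact (map_mul (conjAH U hU) ρ (matLog ρ)).symm
    rw [hmm, trace_conj]
  have tLρ'σ : (ρ' * matLog σ).trace = (ρ * matLog σ).trace := by
    have hmm : ρ' * matLog σ = U * (ρ * matLog σ) * Uᴴ := by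
      conv_lhs => rw [← hLσ, hρ'def]
      exact (map_mul (conjAH U hU) ρ (matLog σ)).symm
    rw [hmm, trace_conj]
  have tω : ω.trace = ρ.trace := by
    rw [hωdef, Matrix.trace_smul, Matrix.trace_add, tρ', smul_eq_mul]
    ring
  have tωLσ : (ω * matLog σ).trace = (ρ * matLog σ).trace := by
    rw [hωdef, Matrix.smul_mul, Matrix.add_mul, Matrix.trace_smul, Matrix.trace_add,
      tLρ'σ, smul_eq_mul]
    ring
  have tωLω : (ω * matLog ω).trace
      = (2⁻¹:ℂ) * (ρ * matLog ω).trace + (2⁻¹:ℂ) * (ρ' * matLog ω).trace := by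
    conv_lhs => rw [hωdef]
    rw [Matrix.smul_mul, Matrix.add_mul, Matrix.trace_smul, Matrix.trace_add, smul_eq_mul]
    ring
  by_cases hRan : LinearMap.range ρ.mulVecLin ≤ LinearMap.range σ.mulVecLin
  · have hk1 : ∀ x, σ *ᵥ x = 0 → ρ *ᵥ x = 0 := (range_le_iff hρ hσ).mp hRan
    have hkσω := hkerσω hk1
    have hRanω : LinearMap.range ω.mulVecLin ≤ LinearMap.range σ.mulVecLin :=
      (range_le_iff hω hσ).mpr hkσω
    have hRanρω : LinearMap.range ρ.mulVecLin ≤ LinearMap.range ω.mulVecLin :=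
      (range_le_iff hρ hω).mpr (fun x hx => (hkerωρ x hx).1)
    have hRanρ'ω : LinearMap.range ρ'.mulVecLin ≤ LinearMap.range ω.mulVecLin :=
      (range_le_iff hρ' hω).mpr (fun x hx => (hkerωρ x hx).2)
    rw [relEnt, relEnt, relEnt, relEnt, if_pos hRan, if_pos hRanω, if_pos hRanρω,
      if_pos hRanρ'ω]
    have hb0 : 0 ≤ (ω * matLog ω).trace.re - (ω * matLog σ).trace.re
        + σ.trace.re - ω.trace.re := klein hω hσ hkσω
    have hc0 : 0 ≤ (ρ * matLog ρ).trace.re - (ρ * matLog ω).trace.re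
        + ω.trace.re - ρ.trace.re := klein hρ hω (fun x hx => (hkerωρ x hx).1)
    have hd0 : 0 ≤ (ρ' * matLog ρ').trace.re - (ρ' * matLog ω).trace.re
        + ω.trace.re - ρ'.trace.re := klein hρ' hω (fun x hx => (hkerωρ x hx).2)
    have habcd : (ρ * matLog ρ).trace.re - (ρ * matLog σ).trace.re + σ.trace.re - ρ.trace.re
        = ((ω * matLog ω).trace.re - (ω * matLog σ).trace.re + σ.trace.re - ω.trace.re)
          + 2⁻¹ * ((ρ * matLog ρ).trace.re - (ρ * matLog ω).trace.re
              + ω.trace.re - ρ.trace.re)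
          + 2⁻¹ * ((ρ' * matLog ρ').trace.re - (ρ' * matLog ω).trace.re
              + ω.trace.re - ρ'.trace.re) := by
      have r1 : (ω * matLog σ).trace.re = (ρ * matLog σ).trace.re := by rw [tωLσ]
      have r2 : (ω * matLog ω).trace.re
          = 2⁻¹ * (ρ * matLog ω).trace.re + 2⁻¹ * (ρ' * matLog ω).trace.re := by
        rw [tωLω]
        rw [show (2⁻¹:ℂ) = ((2⁻¹:ℝ):ℂ) by norm_num]
        rw [Complex.add_re, Complex.re_ofReal_mul, Complex.re_ofReal_mul]
      have r3 : ω.trace.re = ρ.trace.re := by rw [tω]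
      have r4 : ρ'.trace.re = ρ.trace.re := by rw [tρ']
      have r5 : (ρ' * matLog ρ').trace.re = (ρ * matLog ρ).trace.re := by rw [tLρ']
      rw [r1, r2, r3, r4, r5]
      ring
    rw [habcd]
    have h12 : ENNReal.ofReal (2⁻¹:ℝ) = 2⁻¹ := by
      rw [ENNReal.ofReal_inv_of_pos (by norm_num)]
      norm_num
    rw [ENNReal.ofReal_add (by positivity) (by positivity),
      ENNReal.ofReal_add hb0 (by positivity),
      ENNReal.ofReal_mul (by norm_num), ENNReal.ofReal_mul (by norm_num), h12]
  · have hωσ : ¬ (LinearMap.range ω.mulVecLin ≤ LinearMap.range σ.mulVecLin) := fun h =>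
      hRan (le_trans ((range_le_iff hρ hω).mpr (fun x hx => (hkerωρ x hx).1)) h)
    rw [relEnt, relEnt, if_neg hRan, if_neg hωσ]
    simp
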